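/- Let β > 1 and let F_β be the class of functions on [0,1) defined from the Haar-type system as in the context. Then there is a constant C > 0, depending only on β, such that d_n(F_β) ≤ C · n^{−1/2} · (log n)^{−β} for all n ≥ 2, where the Kolmogorov widths are taken in L₂([0,1)) with Lebesgue measure. -/

import Mathlib

/-!
Statement 14 (Example): For `β > 1`, the class `F_β` built from the dyadic indicator
system on `[0,1)` with level-wise coefficient constraint
`∑_{k=1}^{2^ℓ} |c_{ℓ,k}|² ≤ (ℓ+1)^{−2β}` satisfies
`d_n(F_β) ≤ C n^{−1/2} (log n)^{−β}` for all `n ≥ 2`, for a constant `C = C(β) > 0`,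
where the Kolmogorov widths are taken in `L₂([0,1))` with Lebesgue measure.
-/

open MeasureTheory ENNReal

noncomputable section

/-- The unit interval `[0,1)` as a subtype of `ℝ`. -/
abbrev UnitIco : Type := Set.Ico (0 : ℝ) 1

/-- Lebesgue measure on `[0,1)`. -/
def μ01 : Measure UnitIco := MeasureTheory.Measure.comap Subtype.val volume

/-- Kolmogorov widths in `L₂(μ)`. -/
def kolW {D : Type*} [MeasurableSpace D] (μ : Measure D)
    (F : Set (D → ℂ)) (k : ℕ) : ℝ≥0∞ :=
  ⨅ (ℓ : Fin k → (D → ℂ) → ℂ) (φ : Fin k → D → ℂ) (_ : ∀ i, MemLp (φ i) 2 μ),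
    ⨆ f ∈ F, eLpNorm (fun t => f t - ∑ i, ℓ i f * φ i t) 2 μ

/-- `χ ℓ k` is the indicator function of the dyadic interval
`I_{ℓ,k} = [(k−1) 2^{−ℓ}, k 2^{−ℓ}) ⊂ [0,1)`. -/
def dyadicChi (ℓ k : ℕ) : UnitIco → ℂ := fun x =>
  if ((k : ℝ) - 1) / 2 ^ ℓ ≤ (x : ℝ) ∧ (x : ℝ) < (k : ℝ) / 2 ^ ℓ then 1 else 0

/-- The class `F_β`: all functions `f_c = ∑_{ℓ,k} c_{ℓ,k} χ_{ℓ,k}` with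
`∑_{k=1}^{2^ℓ} |c_{ℓ,k}|² ≤ (ℓ+1)^{−2β}` for all `ℓ ∈ ℕ₀`. -/
def Fβ (β : ℝ) : Set (UnitIco → ℂ) :=
  { f | ∃ c : ℕ → ℕ → ℂ,
      (∀ ℓ : ℕ, ∑ k ∈ Finset.Icc 1 (2 ^ ℓ), ‖c ℓ k‖ ^ 2 ≤ ((ℓ : ℝ) + 1) ^ (-(2 * β))) ∧
      f = fun x => ∑' ℓ : ℕ, ∑ k ∈ Finset.Icc 1 (2 ^ ℓ), c ℓ k * dyadicChi ℓ k x }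

/-- index of the dyadic interval containing x -/
def kIdx (ℓ : ℕ) (x : UnitIco) : ℕ := Nat.floor ((x : ℝ) * 2 ^ ℓ) + 1

lemma kIdx_mem (ℓ : ℕ) (x : UnitIco) : kIdx ℓ x ∈ Finset.Icc 1 (2 ^ ℓ) := by
  obtain ⟨hx0, hx1⟩ := x.2
  have h2 : (0:ℝ) < 2 ^ ℓ := by positivity
  have : (x : ℝ) * 2 ^ ℓ < 2 ^ ℓ := by nlinarith
  have hfl : Nat.floor ((x : ℝ) * 2 ^ ℓ) < 2 ^ ℓ := by
    rw [Nat.floor_lt (by positivity : (0:ℝ) ≤ (x : ℝ) * 2 ^ ℓ)]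
    push_cast
    exact this
  rw [Finset.mem_Icc]
  unfold kIdx
  omega

lemma kIdx_eq_iff (ℓ k : ℕ) (hk : 1 ≤ k) (x : UnitIco) :
    (((k : ℝ) - 1) / 2 ^ ℓ ≤ (x : ℝ) ∧ (x : ℝ) < (k : ℝ) / 2 ^ ℓ) ↔ kIdx ℓ x = k := by
  obtain ⟨hx0, hx1⟩ := x.2
  have h2 : (0:ℝ) < 2 ^ ℓ := by positivity
  rw [div_le_iff₀ h2, lt_div_iff₀ h2]
  constructor
  · rintro ⟨h1, h3⟩
    have hfl : Nat.floor ((x:ℝ) * 2 ^ ℓ) = k - 1 := by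
      rw [Nat.floor_eq_iff (by positivity)]
      constructor
      · push_cast [Nat.cast_sub hk]; linarith
      · push_cast [Nat.cast_sub hk]; linarith
    simp [kIdx, hfl]; omega
  · intro h
    have h1 : Nat.floor ((x:ℝ) * 2 ^ ℓ) = k - 1 := by simp [kIdx] at h; omega
    have h2' := Nat.floor_le (by positivity : (0:ℝ) ≤ (x:ℝ) * 2 ^ ℓ)
    have h3' := Nat.lt_floor_add_one ((x:ℝ) * 2 ^ ℓ)
    rw [h1] at h2' h3'
    push_cast [Nat.cast_sub hk] at h2' h3'
    constructor <;> linarith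

lemma dyadicChi_eq (ℓ k : ℕ) (hk : 1 ≤ k) (x : UnitIco) :
    dyadicChi ℓ k x = if kIdx ℓ x = k then 1 else 0 := by
  have key := kIdx_eq_iff ℓ k hk x
  simp only [dyadicChi]
  by_cases h : kIdx ℓ x = k
  · rw [if_pos (key.mpr h), if_pos h]
  · rw [if_neg (fun hc => h (key.mp hc)), if_neg h]

lemma level_collapse (ℓ : ℕ) (c : ℕ → ℂ) (x : UnitIco) :
    ∑ k ∈ Finset.Icc 1 (2 ^ ℓ), c k * dyadicChi ℓ k x = c (kIdx ℓ x) := by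
  have : ∀ k ∈ Finset.Icc 1 (2 ^ ℓ), c k * dyadicChi ℓ k x
      = if kIdx ℓ x = k then c k else 0 := by
    intro k hk
    rw [dyadicChi_eq ℓ k (Finset.mem_Icc.mp hk).1 x]
    split <;> simp
  rw [Finset.sum_congr rfl this, Finset.sum_ite_eq, if_pos (kIdx_mem ℓ x)]
lemma measurable_dyadicChi (ℓ k : ℕ) : Measurable (dyadicChi ℓ k) := by
  have hset : MeasurableSet {x : UnitIco |
      ((k : ℝ) - 1) / 2 ^ ℓ ≤ (x : ℝ) ∧ (x : ℝ) < (k : ℝ) / 2 ^ ℓ} := by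
    have : {x : UnitIco | ((k : ℝ) - 1) / 2 ^ ℓ ≤ (x : ℝ) ∧ (x : ℝ) < (k : ℝ) / 2 ^ ℓ}
        = (fun x : UnitIco => (x : ℝ)) ⁻¹' Set.Ico (((k : ℝ) - 1) / 2 ^ ℓ) ((k : ℝ) / 2 ^ ℓ) := by
      ext x; simp [Set.mem_Ico]
    rw [this]
    exact measurable_subtype_coe measurableSet_Ico
  exact Measurable.ite hset measurable_const measurable_const

lemma measurableSet_kIdx (ℓ k : ℕ) (hk : 1 ≤ k) :
    MeasurableSet {x : UnitIco | kIdx ℓ x = k} := by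
  have : {x : UnitIco | kIdx ℓ x = k}
      = (fun x : UnitIco => (x : ℝ)) ⁻¹' Set.Ico (((k : ℝ) - 1) / 2 ^ ℓ) ((k : ℝ) / 2 ^ ℓ) := by
    ext x
    simp only [Set.mem_setOf_eq, Set.mem_preimage, Set.mem_Ico]
    exact (kIdx_eq_iff ℓ k hk x).symm
  rw [this]
  exact measurable_subtype_coe measurableSet_Ico

lemma mu01_kIdx (ℓ k : ℕ) (hk : k ∈ Finset.Icc 1 (2 ^ ℓ)) :
    μ01 {x : UnitIco | kIdx ℓ x = k} = ENNReal.ofReal (((2:ℝ) ^ ℓ)⁻¹) := by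
  obtain ⟨hk1, hk2⟩ := Finset.mem_Icc.mp hk
  have h2 : (0:ℝ) < 2 ^ ℓ := by positivity
  have hab : Set.Ico (((k : ℝ) - 1) / 2 ^ ℓ) ((k : ℝ) / 2 ^ ℓ) ⊆ Set.Ico (0:ℝ) 1 := by
    apply Set.Ico_subset_Ico
    · apply div_nonneg _ h2.le
      have : (1:ℝ) ≤ (k:ℝ) := by exact_mod_cast hk1
      linarith
    · rw [div_le_one h2]
      push_cast
      exact_mod_cast hk2
  have hSeq : {x : UnitIco | kIdx ℓ x = k}
      = (Subtype.val : UnitIco → ℝ) ⁻¹' Set.Ico (((k : ℝ) - 1) / 2 ^ ℓ) ((k : ℝ) / 2 ^ ℓ) := by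
    ext x
    simp only [Set.mem_setOf_eq, Set.mem_preimage, Set.mem_Ico]
    exact (kIdx_eq_iff ℓ k hk1 x).symm
  have hemb : MeasurableEmbedding (Subtype.val : UnitIco → ℝ) :=
    MeasurableEmbedding.subtype_coe measurableSet_Ico
  rw [hSeq, μ01, hemb.comap_apply, Subtype.image_preimage_coe,
    Set.inter_eq_right.mpr hab, Real.volume_Ico]
  congr 1
  field_simp
  ring

lemma level_eLpNorm (ℓ : ℕ) (c : ℕ → ℂ) (B : ℝ) (hB : 0 ≤ B)
    (hc : ∑ k ∈ Finset.Icc 1 (2 ^ ℓ), ‖c k‖ ^ 2 ≤ B ^ 2) :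
    eLpNorm (fun x => ∑ k ∈ Finset.Icc 1 (2 ^ ℓ), c k * dyadicChi ℓ k x) 2 μ01
      ≤ ENNReal.ofReal (B * ((2:ℝ) ^ ℓ) ^ (-(1/2) : ℝ)) := by
  rw [eLpNorm_eq_lintegral_rpow_enorm_toReal (by norm_num) (by norm_num)]
  have hpt : (2 : ℝ≥0∞).toReal = 2 := by simp
  rw [hpt]
  have hint : (∫⁻ x, (‖∑ k ∈ Finset.Icc 1 (2 ^ ℓ), c k * dyadicChi ℓ k x‖₊ : ℝ≥0∞) ^ (2:ℝ) ∂μ01)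
      ≤ ENNReal.ofReal (B ^ 2 * ((2:ℝ) ^ ℓ)⁻¹) := by
    have heq : ∀ x : UnitIco,
        (‖∑ k ∈ Finset.Icc 1 (2 ^ ℓ), c k * dyadicChi ℓ k x‖₊ : ℝ≥0∞) ^ (2:ℝ)
        = ∑ k ∈ Finset.Icc 1 (2 ^ ℓ),
            (if kIdx ℓ x = k then (‖c k‖₊ : ℝ≥0∞) ^ (2:ℝ) else 0) := by
      intro x
      rw [level_collapse, Finset.sum_ite_eq, if_pos (kIdx_mem ℓ x)]
    simp_rw [heq]
    rw [lintegral_finset_sum _ (fun k hk => by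
      exact Measurable.ite (measurableSet_kIdx ℓ k (Finset.mem_Icc.mp hk).1)
        measurable_const measurable_const)]
    have hterm : ∀ k ∈ Finset.Icc 1 (2 ^ ℓ),
        (∫⁻ x, (if kIdx ℓ x = k then (‖c k‖₊ : ℝ≥0∞) ^ (2:ℝ) else 0) ∂μ01)
        = ENNReal.ofReal (‖c k‖ ^ 2) * ENNReal.ofReal (((2:ℝ) ^ ℓ)⁻¹) := by
      intro k hk
      have : (fun x : UnitIco => (if kIdx ℓ x = k then (‖c k‖₊ : ℝ≥0∞) ^ (2:ℝ) else 0))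
          = {x : UnitIco | kIdx ℓ x = k}.indicator (fun _ => (‖c k‖₊ : ℝ≥0∞) ^ (2:ℝ)) := by
        ext x
        simp [Set.indicator_apply]
      rw [this, lintegral_indicator_const (measurableSet_kIdx ℓ k (Finset.mem_Icc.mp hk).1),
        mu01_kIdx ℓ k hk]
      congr 1
      rw [← enorm_eq_nnnorm, ← ofReal_norm, ENNReal.ofReal_rpow_of_nonneg (norm_nonneg _)
        (by norm_num), Real.rpow_two]
    rw [Finset.sum_congr rfl hterm, ← Finset.sum_mul, ← ENNReal.ofReal_sum_of_nonneg
      (fun k _ => sq_nonneg _), ← ENNReal.ofReal_mul (by positivity)]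
    exact ENNReal.ofReal_le_ofReal (by
      have h2 : (0:ℝ) ≤ ((2:ℝ) ^ ℓ)⁻¹ := by positivity
      exact mul_le_mul_of_nonneg_right hc h2)
  calc (∫⁻ x, (‖∑ k ∈ Finset.Icc 1 (2 ^ ℓ), c k * dyadicChi ℓ k x‖₊ : ℝ≥0∞) ^ (2:ℝ) ∂μ01)
        ^ ((1:ℝ)/2)
      ≤ (ENNReal.ofReal (B ^ 2 * ((2:ℝ) ^ ℓ)⁻¹)) ^ ((1:ℝ)/2) :=
        ENNReal.rpow_le_rpow hint (by norm_num)
    _ = ENNReal.ofReal (B * ((2:ℝ) ^ ℓ) ^ (-(1/2) : ℝ)) := by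
        rw [ENNReal.ofReal_rpow_of_nonneg (by positivity) (by norm_num)]
        congr 1
        rw [Real.mul_rpow (sq_nonneg _) (by positivity)]
        congr 1
        · rw [← Real.rpow_two, ← Real.rpow_mul hB]
          norm_num
        · rw [← Real.rpow_neg_one ((2:ℝ)^ℓ), ← Real.rpow_mul (by positivity)]
          norm_num
instance : IsFiniteMeasure μ01 := by
  constructor
  have hemb : MeasurableEmbedding (Subtype.val : UnitIco → ℝ) :=
    MeasurableEmbedding.subtype_coe measurableSet_Ico
  rw [μ01, hemb.comap_apply, Subtype.coe_image_univ, Real.volume_Ico]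
  norm_num

lemma memLp_dyadicChi (ℓ k : ℕ) : MemLp (dyadicChi ℓ k) 2 μ01 := by
  refine ⟨(measurable_dyadicChi ℓ k).aestronglyMeasurable, ?_⟩
  refine lt_of_le_of_lt (eLpNorm_le_of_ae_bound (C := 1)
    (Filter.Eventually.of_forall fun x => ?_)) ?_
  · simp only [dyadicChi]
    split <;> simp
  · exact ENNReal.mul_lt_top (ENNReal.rpow_lt_top_of_nonneg (by positivity)
      (measure_ne_top μ01 _)) ENNReal.ofReal_lt_top

lemma eLpNorm_tsum_le' (h : ℕ → UnitIco → ℂ)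
    (hm : ∀ j, Measurable (h j))
    (hs : ∀ x, Summable fun j => h j x) :
    eLpNorm (fun x => ∑' j, h j x) 2 μ01 ≤ ∑' j, eLpNorm (h j) 2 μ01 := by
  have hSm : ∀ m, AEStronglyMeasurable (fun x => ∑ j ∈ Finset.range m, h j x) μ01 :=
    fun m => (Finset.measurable_sum _ (fun j _ => hm j)).aestronglyMeasurable
  have hlim := MeasureTheory.Lp.eLpNorm_lim_le_liminf_eLpNorm (μ := μ01) (p := 2) hSm
      (fun x => ∑' j, h j x)
      (Filter.Eventually.of_forall fun x => (hs x).hasSum.tendsto_sum_nat)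
  refine hlim.trans ?_
  have hb : ∀ m, eLpNorm (fun x => ∑ j ∈ Finset.range m, h j x) 2 μ01
      ≤ ∑' j, eLpNorm (h j) 2 μ01 := by
    intro m
    have h1 : eLpNorm (∑ j ∈ Finset.range m, h j) 2 μ01
        ≤ ∑ j ∈ Finset.range m, eLpNorm (h j) 2 μ01 :=
      eLpNorm_sum_le (fun j _ => (hm j).aestronglyMeasurable) (by norm_num)
    have h2 : (fun x => ∑ j ∈ Finset.range m, h j x) = ∑ j ∈ Finset.range m, h j := by
      ext x; simp
    rw [h2]
    exact h1.trans (ENNReal.sum_le_tsum _)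
  calc Filter.atTop.liminf (fun m => eLpNorm (fun x => ∑ j ∈ Finset.range m, h j x) 2 μ01)
      ≤ Filter.atTop.liminf (fun _ => ∑' j, eLpNorm (h j) 2 μ01) :=
        Filter.liminf_le_liminf (Filter.Eventually.of_forall hb)
    _ = ∑' j, eLpNorm (h j) 2 μ01 := Filter.liminf_const _
lemma reindex_sum (L n : ℕ) (hL : 2 ^ L ≤ n) (a : ℕ → ℕ → ℂ) :
    ∑ i ∈ Finset.range n, (if Nat.log 2 (i+1) < L
        then a (Nat.log 2 (i+1)) (i + 2 - 2 ^ Nat.log 2 (i+1)) else 0)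
      = ∑ ℓ ∈ Finset.range L, ∑ k ∈ Finset.Icc 1 (2 ^ ℓ), a ℓ k := by
  rw [← Finset.sum_filter, Finset.sum_sigma']
  refine (Finset.sum_nbij' (fun p => 2 ^ p.1 + p.2 - 2)
    (fun i => ⟨Nat.log 2 (i+1), i + 2 - 2 ^ Nat.log 2 (i+1)⟩) ?_ ?_ ?_ ?_ ?_).symm
  · rintro ⟨ℓ, k⟩ hp
    simp only [Finset.mem_sigma, Finset.mem_range, Finset.mem_Icc] at hp
    obtain ⟨hℓ, hk1, hk2⟩ := hp
    have h1 : 2 ^ (ℓ+1) ≤ 2 ^ L := Nat.pow_le_pow_right (by norm_num) hℓ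
    have h2 : 1 ≤ 2 ^ ℓ := Nat.one_le_two_pow
    have hps : 2 ^ (ℓ+1) = 2 ^ ℓ * 2 := pow_succ 2 ℓ
    have hlog : Nat.log 2 (2 ^ ℓ + k - 2 + 1) = ℓ :=
      Nat.log_eq_of_pow_le_of_lt_pow (by omega) (by omega)
    simp only [Finset.mem_filter, Finset.mem_range, hlog]
    omega
  · intro i hi
    simp only [Finset.mem_filter, Finset.mem_range] at hi
    obtain ⟨hin, hlt⟩ := hi
    have h1 : 2 ^ Nat.log 2 (i+1) ≤ i + 1 := Nat.pow_log_le_self 2 (Nat.succ_ne_zero i)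
    have h2 : i + 1 < 2 ^ (Nat.log 2 (i+1) + 1) := Nat.lt_pow_succ_log_self one_lt_two _
    have hps : 2 ^ (Nat.log 2 (i+1) + 1) = 2 ^ Nat.log 2 (i+1) * 2 := pow_succ 2 _
    simp only [Finset.mem_sigma, Finset.mem_range, Finset.mem_Icc]
    refine ⟨hlt, by omega, by omega⟩
  · rintro ⟨ℓ, k⟩ hp
    simp only [Finset.mem_sigma, Finset.mem_range, Finset.mem_Icc] at hp
    obtain ⟨hℓ, hk1, hk2⟩ := hp
    have h2 : 1 ≤ 2 ^ ℓ := Nat.one_le_two_pow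
    have hlog : Nat.log 2 (2 ^ ℓ + k - 2 + 1) = ℓ :=
      Nat.log_eq_of_pow_le_of_lt_pow (by omega) (by simp [pow_succ]; omega)
    simp only [hlog]
    have : 2 ^ ℓ + k - 2 + 2 - 2 ^ ℓ = k := by omega
    simp [this]
  · intro i hi
    simp only [Finset.mem_filter, Finset.mem_range] at hi
    have h1 : 2 ^ Nat.log 2 (i+1) ≤ i + 1 := Nat.pow_log_le_self 2 (Nat.succ_ne_zero i)
    show 2 ^ Nat.log 2 (i+1) + (i + 2 - 2 ^ Nat.log 2 (i+1)) - 2 = i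
    omega
  · rintro ⟨ℓ, k⟩ hp
    simp only [Finset.mem_sigma, Finset.mem_range, Finset.mem_Icc] at hp
    obtain ⟨hℓ, hk1, hk2⟩ := hp
    have h2 : 1 ≤ 2 ^ ℓ := Nat.one_le_two_pow
    have hlog : Nat.log 2 (2 ^ ℓ + k - 2 + 1) = ℓ :=
      Nat.log_eq_of_pow_le_of_lt_pow (by omega) (by simp [pow_succ]; omega)
    simp only [hlog]
    have : 2 ^ ℓ + k - 2 + 2 - 2 ^ ℓ = k := by omega
    simp [this]
set_option maxHeartbeats 1000000 in
theorem statement14 (β : ℝ) (hβ : 1 < β) :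
    ∃ C : ℝ, 0 < C ∧
      ∀ n : ℕ, 2 ≤ n →
        kolW μ01 (Fβ β) n ≤
          ENNReal.ofReal (C * (n : ℝ) ^ (-(1 / 2) : ℝ) * Real.log n ^ (-β)) := by
  classical
  have hβ0 : (0:ℝ) < β := lt_trans one_pos hβ
  set r : ℝ := (2:ℝ) ^ (-(1/2) : ℝ) with hr
  have hr0 : 0 < r := Real.rpow_pos_of_pos (by norm_num) _
  have hr1 : r < 1 := Real.rpow_lt_one_of_one_lt_of_neg (by norm_num) (by norm_num)
  have hr1' : (0:ℝ) < 1 - r := by linarith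
  have hlog2 : (0:ℝ) < Real.log 2 := Real.log_pos one_lt_two
  set C : ℝ := (1 - r)⁻¹ * (2:ℝ) ^ ((1/2) : ℝ) * Real.log 2 ^ β with hC
  have hC0 : 0 < C := by
    apply mul_pos (mul_pos (inv_pos.mpr hr1') (Real.rpow_pos_of_pos (by norm_num) _))
    exact Real.rpow_pos_of_pos hlog2 _
  refine ⟨C, hC0, ?_⟩
  intro n hn
  set L := Nat.log 2 n with hLdef
  have hLn : 2 ^ L ≤ n := Nat.pow_log_le_self 2 (by omega)
  have hnL : n < 2 ^ (L + 1) := Nat.lt_pow_succ_log_self one_lt_two n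
  set lev : ℕ → ℕ := fun i => Nat.log 2 (i + 1) with hlev
  set lfun : Fin n → (UnitIco → ℂ) → ℂ :=
    fun i f => if h : f ∈ Fβ β then h.choose (lev i) ((i:ℕ) + 2 - 2 ^ lev i) else 0 with hlfun
  set φ : Fin n → UnitIco → ℂ :=
    fun i x => if lev i < L then dyadicChi (lev i) ((i:ℕ) + 2 - 2 ^ lev i) x else 0 with hφdef
  have hφmem : ∀ i, MemLp (φ i) 2 μ01 := by
    intro i
    by_cases h : lev (i:ℕ) < L
    · have he : φ i = dyadicChi (lev i) ((i:ℕ) + 2 - 2 ^ lev i) := by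
        funext x; simp only [hφdef, if_pos h]
      rw [he]; exact memLp_dyadicChi _ _
    · have he : φ i = (0 : UnitIco → ℂ) := by
        funext x; simp only [hφdef, if_neg h, Pi.zero_apply]
      rw [he]; exact MemLp.zero
  have step : kolW μ01 (Fβ β) n
      ≤ ⨆ f ∈ Fβ β, eLpNorm (fun t => f t - ∑ i, lfun i f * φ i t) 2 μ01 :=
    iInf_le_of_le lfun (iInf_le_of_le φ (iInf_le _ hφmem))
  refine step.trans (iSup₂_le fun f hf => ?_)
  obtain ⟨hc1, hc2⟩ := hf.choose_spec
  set c : ℕ → ℕ → ℂ := hf.choose with hcdef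
  set g : ℕ → UnitIco → ℂ :=
    fun ℓ x => ∑ k ∈ Finset.Icc 1 (2 ^ ℓ), c ℓ k * dyadicChi ℓ k x with hg
  have hBsq : ∀ ℓ:ℕ, (((ℓ:ℝ)+1) ^ (-β)) ^ 2 = ((ℓ:ℝ)+1) ^ (-(2*β)) := by
    intro ℓ
    rw [← Real.rpow_two, ← Real.rpow_mul (by positivity)]
    ring_nf
  have hnorm : ∀ (ℓ:ℕ) (x : UnitIco), ‖g ℓ x‖ ≤ ((ℓ:ℝ)+1) ^ (-β) := by
    intro ℓ x
    have hco : g ℓ x = c ℓ (kIdx ℓ x) := level_collapse ℓ (c ℓ) x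
    have hmem := kIdx_mem ℓ x
    have hsq : ‖c ℓ (kIdx ℓ x)‖ ^ 2 ≤ ∑ k ∈ Finset.Icc 1 (2 ^ ℓ), ‖c ℓ k‖ ^ 2 :=
      Finset.single_le_sum (fun k _ => sq_nonneg ‖c ℓ k‖) hmem
    have hb := (hsq.trans (hc1 ℓ))
    rw [← hBsq ℓ] at hb
    have hBpos : 0 < ((ℓ:ℝ)+1) ^ (-β) := Real.rpow_pos_of_pos (by positivity) _
    rw [hco]
    nlinarith [norm_nonneg (c ℓ (kIdx ℓ x))]
  have hmaj : Summable (fun ℓ:ℕ => ((ℓ:ℝ)+1) ^ (-β)) := by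
    have h0 : Summable (fun m:ℕ => (m:ℝ) ^ (-β)) :=
      Real.summable_nat_rpow.mpr (by linarith)
    have h1 := (summable_nat_add_iff 1).mpr h0
    refine h1.congr fun ℓ => ?_
    push_cast
    ring_nf
  have hsumm : ∀ x : UnitIco, Summable fun ℓ => g ℓ x := fun x =>
    Summable.of_norm_bounded hmaj (fun ℓ => hnorm ℓ x)
  have hkey : (fun x => f x - ∑ i, lfun i f * φ i x)
      = fun x => ∑' j : ℕ, g (j + L) x := by
    funext x
    have hpart : ∑ i : Fin n, lfun i f * φ i x = ∑ ℓ ∈ Finset.range L, g ℓ x := by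
      have hterm : ∀ i : Fin n, lfun i f * φ i x
          = (if lev (i:ℕ) < L
              then c (lev (i:ℕ)) ((i:ℕ) + 2 - 2 ^ lev (i:ℕ))
                * dyadicChi (lev (i:ℕ)) ((i:ℕ) + 2 - 2 ^ lev (i:ℕ)) x else 0) := by
        intro i
        simp only [hlfun, hφdef, dif_pos hf, mul_ite, mul_zero]
        rfl
      rw [Finset.sum_congr rfl (fun i _ => hterm i)]
      rw [Fin.sum_univ_eq_sum_range (fun i => if Nat.log 2 (i+1) < L
          then c (Nat.log 2 (i+1)) (i + 2 - 2 ^ Nat.log 2 (i+1))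
            * dyadicChi (Nat.log 2 (i+1)) (i + 2 - 2 ^ Nat.log 2 (i+1)) x else 0)]
      exact reindex_sum L n hLn (fun ℓ k => c ℓ k * dyadicChi ℓ k x)
    have hfx : f x = ∑' ℓ : ℕ, g ℓ x := by rw [hc2]
    rw [hfx, hpart, ← Summable.sum_add_tsum_nat_add L (hsumm x)]
    ring
  rw [hkey]
  have hmeas : ∀ ℓ:ℕ, Measurable (g ℓ) := by
    intro ℓ
    exact Finset.measurable_sum _ fun k _ => (measurable_dyadicChi ℓ k).const_mul (c ℓ k)
  have htail : ∀ x : UnitIco, Summable fun j => g (j + L) x := fun x =>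
    (summable_nat_add_iff (f := fun ℓ => g ℓ x) L).mpr (hsumm x)
  have h1 : eLpNorm (fun x => ∑' j : ℕ, g (j + L) x) 2 μ01
      ≤ ∑' j : ℕ, eLpNorm (g (j + L)) 2 μ01 :=
    eLpNorm_tsum_le' (fun j => g (j + L)) (fun j => hmeas _) htail
  have hlvl : ∀ ℓ:ℕ, eLpNorm (g ℓ) 2 μ01
      ≤ ENNReal.ofReal (((ℓ:ℝ)+1) ^ (-β) * ((2:ℝ) ^ ℓ) ^ (-(1/2) : ℝ)) := by
    intro ℓ
    exact level_eLpNorm ℓ (c ℓ) _ (Real.rpow_nonneg (by positivity) _)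
      (by rw [hBsq ℓ]; exact hc1 ℓ)
  set A : ℝ := ((L:ℝ)+1) ^ (-β) * ((2:ℝ) ^ L) ^ (-(1/2) : ℝ) with hA
  have hA0 : 0 ≤ A := by
    apply mul_nonneg (Real.rpow_nonneg (by positivity) _) (Real.rpow_nonneg (by positivity) _)
  have hpowr : ∀ j : ℕ, ((2:ℝ) ^ j) ^ (-(1/2) : ℝ) = r ^ j := by
    intro j
    rw [← Real.rpow_natCast (2:ℝ) j, ← Real.rpow_mul (by norm_num : (0:ℝ) ≤ 2)]
    have hcomm : (j:ℝ) * (-(1/2)) = (-(1/2)) * (j:ℝ) := mul_comm _ _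
    rw [hcomm, Real.rpow_mul (by norm_num : (0:ℝ) ≤ 2), Real.rpow_natCast]
  have hterm2 : ∀ j:ℕ, (((j+L:ℕ):ℝ)+1) ^ (-β) * ((2:ℝ) ^ (j+L)) ^ (-(1/2) : ℝ)
      ≤ A * r ^ j := by
    intro j
    have hf1 : (((j+L:ℕ):ℝ)+1) ^ (-β) ≤ ((L:ℝ)+1) ^ (-β) := by
      apply Real.rpow_le_rpow_of_nonpos (by positivity) _ (by linarith)
      push_cast
      linarith [Nat.cast_nonneg (α := ℝ) j]
    have hf2 : ((2:ℝ) ^ (j+L)) ^ (-(1/2) : ℝ) = ((2:ℝ) ^ L) ^ (-(1/2) : ℝ) * r ^ j := by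
      rw [pow_add, Real.mul_rpow (by positivity) (by positivity), hpowr j]
      ring
    rw [hf2, hA]
    have h2L : (0:ℝ) ≤ ((2:ℝ) ^ L) ^ (-(1/2) : ℝ) := Real.rpow_nonneg (by positivity) _
    have hrj : (0:ℝ) ≤ r ^ j := pow_nonneg hr0.le j
    calc (((j+L:ℕ):ℝ)+1) ^ (-β) * (((2:ℝ) ^ L) ^ (-(1/2) : ℝ) * r ^ j)
        ≤ ((L:ℝ)+1) ^ (-β) * (((2:ℝ) ^ L) ^ (-(1/2) : ℝ) * r ^ j) := by
          apply mul_le_mul_of_nonneg_right hf1 (mul_nonneg h2L hrj)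
      _ = ((L:ℝ)+1) ^ (-β) * ((2:ℝ) ^ L) ^ (-(1/2) : ℝ) * r ^ j := by ring
  have hsA : Summable (fun j : ℕ => A * r ^ j) :=
    (summable_geometric_of_lt_one hr0.le hr1).mul_left A
  have h2 : (∑' j : ℕ, eLpNorm (g (j + L)) 2 μ01) ≤ ENNReal.ofReal (A * (1 - r)⁻¹) := by
    calc (∑' j : ℕ, eLpNorm (g (j + L)) 2 μ01)
        ≤ ∑' j : ℕ, ENNReal.ofReal (A * r ^ j) := by
          apply ENNReal.tsum_le_tsum
          intro j
          refine (hlvl (j + L)).trans (ENNReal.ofReal_le_ofReal ?_)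
          exact hterm2 j
      _ = ENNReal.ofReal (∑' j : ℕ, A * r ^ j) := by
          rw [ENNReal.ofReal_tsum_of_nonneg
            (fun j => mul_nonneg hA0 (pow_nonneg hr0.le j)) hsA]
      _ = ENNReal.ofReal (A * (1 - r)⁻¹) := by
          rw [tsum_mul_left, tsum_geometric_of_lt_one hr0.le hr1]
  refine (h1.trans h2).trans (ENNReal.ofReal_le_ofReal ?_)
  -- final real inequality
  have hn1 : (1:ℝ) < (n:ℝ) := by exact_mod_cast (by omega : (1:ℕ) < n)
  have hnpos : (0:ℝ) < (n:ℝ) := lt_trans one_pos hn1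
  have hlogn : (0:ℝ) < Real.log n := Real.log_pos hn1
  have hn2 : (n:ℝ) ≤ (2:ℝ) ^ (L+1) := by exact_mod_cast hnL.le
  have hf2 : ((2:ℝ) ^ L) ^ (-(1/2) : ℝ) ≤ (2:ℝ) ^ ((1/2) : ℝ) * (n:ℝ) ^ (-(1/2) : ℝ) := by
    have ha : ((2:ℝ) ^ (L+1)) ^ (-(1/2) : ℝ) ≤ (n:ℝ) ^ (-(1/2) : ℝ) :=
      Real.rpow_le_rpow_of_nonpos hnpos hn2 (by norm_num)
    have hb : ((2:ℝ) ^ (L+1)) ^ (-(1/2) : ℝ) = ((2:ℝ) ^ L) ^ (-(1/2) : ℝ) * r := by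
      rw [pow_succ, Real.mul_rpow (by positivity) (by norm_num), hr]
    have hc : ((2:ℝ) ^ L) ^ (-(1/2) : ℝ) = ((2:ℝ) ^ (L+1)) ^ (-(1/2) : ℝ) * (2:ℝ) ^ ((1/2) : ℝ) := by
      rw [hb, hr, mul_assoc, ← Real.rpow_add (by norm_num : (0:ℝ) < 2)]
      norm_num
    rw [hc]
    calc ((2:ℝ) ^ (L+1)) ^ (-(1/2) : ℝ) * (2:ℝ) ^ ((1/2) : ℝ)
        ≤ (n:ℝ) ^ (-(1/2) : ℝ) * (2:ℝ) ^ ((1/2) : ℝ) :=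
          mul_le_mul_of_nonneg_right ha (Real.rpow_nonneg (by norm_num) _)
      _ = (2:ℝ) ^ ((1/2) : ℝ) * (n:ℝ) ^ (-(1/2) : ℝ) := by ring
  have hf1 : ((L:ℝ)+1) ^ (-β) ≤ Real.log 2 ^ β * Real.log n ^ (-β) := by
    have hloglog : Real.log n ≤ ((L:ℝ)+1) * Real.log 2 := by
      calc Real.log n ≤ Real.log ((2:ℝ) ^ (L+1)) := Real.log_le_log hnpos hn2
        _ = ((L+1:ℕ):ℝ) * Real.log 2 := by rw [Real.log_pow]
        _ = ((L:ℝ)+1) * Real.log 2 := by push_cast; ring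
    have hdiv : Real.log n / Real.log 2 ≤ (L:ℝ)+1 := (div_le_iff₀ hlog2).mpr hloglog
    have hdivpos : 0 < Real.log n / Real.log 2 := div_pos hlogn hlog2
    have h1' : ((L:ℝ)+1) ^ (-β) ≤ (Real.log n / Real.log 2) ^ (-β) :=
      Real.rpow_le_rpow_of_nonpos hdivpos hdiv (by linarith)
    refine h1'.trans_eq ?_
    rw [Real.div_rpow hlogn.le hlog2.le, Real.rpow_neg hlog2.le, div_eq_mul_inv, inv_inv]
    ring
  have hcomb : A ≤ (Real.log 2 ^ β * Real.log n ^ (-β)) * ((2:ℝ) ^ ((1/2) : ℝ) * (n:ℝ) ^ (-(1/2) : ℝ)) := by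
    rw [hA]
    apply mul_le_mul hf1 hf2 (Real.rpow_nonneg (by positivity) _)
    exact mul_nonneg (Real.rpow_nonneg hlog2.le _) (Real.rpow_nonneg hlogn.le _)
  calc A * (1 - r)⁻¹
      ≤ ((Real.log 2 ^ β * Real.log n ^ (-β)) * ((2:ℝ) ^ ((1/2) : ℝ) * (n:ℝ) ^ (-(1/2) : ℝ))) * (1 - r)⁻¹ :=
        mul_le_mul_of_nonneg_right hcomb (inv_nonneg.mpr hr1'.le)
    _ = C * (n:ℝ) ^ (-(1 / 2) : ℝ) * Real.log n ^ (-β) := by rw [hC]; ring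

end
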